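/- Let $(M, Q')$ be a nondegenerate quadratic space over an algebraically closed field $K$ of characteristic $0$ with basis $\{w, v_1, \dots, v_n, w'\}$ in which $Q'$ has block antidiagonal form pairing $w$ with $w'$ and restricting to a nondegenerate form $Q'_0$ on $M_0 = \mathrm{span}(v_1, \dots, v_n)$. Let $\nu : \mathbb{G}_m \to \mathrm{GL}(M)$ be the cocharacter $t \mapsto \mathrm{diag}(t^{-1}, 1, \dots, 1, t)$, fix a maximal torus $T_{\mathrm{SO}(M)}$ of $\mathrm{SO}(M)$ containing $\mathrm{im}\,\nu$ and contained in the Levi of $\nu$, and let $\alpha$ be a positive root of $\mathrm{SO}(M)$ relative to $\nu$ (i.e., a root whose root space lies in $\mathrm{Lie}\,U_{\mathrm{SO}(M),\nu}$). If $\mathfrak{h}$ is a one-dimensional subalgebra of $\mathrm{Lie}\,U_{\mathrm{SO}(M),\nu^{-1}}$ such that (1) $\mathfrak{t} := [\mathfrak{h}, \mathfrak{so}(M)_\alpha]$ is a one-dimensional subalgebra of $\mathfrak{t}_{\mathrm{SO}(M)}$, and (2) $[\mathfrak{t}, \mathfrak{h}] \subseteq \mathfrak{h}$, then $\mathfrak{h}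 = \mathfrak{so}(M)_{-\alpha}$, the root space of $-\alpha$. -/

import Mathlib

section

variable {K M : Type*} [Field K] [AddCommGroup M] [Module K M]

/-- `x` is skew-adjoint with respect to the bilinear form `Bf`,
i.e. lies in the Lie algebra `so(M, Bf)`. -/
def IsSkewAdjEnd (Bf : M →ₗ[K] M →ₗ[K] K) (x : Module.End K M) : Prop :=
  ∀ u v : M, Bf (x u) v + Bf u (x v) = 0

/-- The root space of the linear functional `α` with respect to the torus `t` inside
`so(M, Bf)`. -/
def rootSet (Bf : M →ₗ[K] M →ₗ[K] K) (t : Submodule K (Module.End K M))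
    (α : Module.End K M →ₗ[K] K) : Set (Module.End K M) :=
  {x | IsSkewAdjEnd Bf x ∧ ∀ H ∈ t, ⁅H, x⁆ = α H • x}

end

set_option maxHeartbeats 4000000 in
/-- (Lemma 4.2 of the paper.)  Let `(M, Q')` be a nondegenerate quadratic space over an
algebraically closed field of characteristic `0` with isotropic dual pair `w, w'`
orthogonal to `M₀`, `D = dν` the derivative of the cocharacter `ν = diag(t⁻¹, 1, …, 1, t)`,
`t` a maximal torus (Cartan subalgebra) of `so(M)` containing `D`, and `α` a positive root
relative to `ν`.  If `h` is a one-dimensional subalgebra of `Lie U_{SO(M), ν⁻¹}` such that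
`[h, so(M)_α]` is a one-dimensional subalgebra of the Cartan and `[[h, so(M)_α], h] ⊆ h`,
then `h = so(M)_{-α}`. -/
theorem stmt_5 {K M : Type*} [Field K] [IsAlgClosed K] [CharZero K]
    [AddCommGroup M] [Module K M] [FiniteDimensional K M]
    (Bf : M →ₗ[K] M →ₗ[K] K) (hsymm : ∀ u v, Bf u v = Bf v u)
    (hnd : ∀ u : M, (∀ v, Bf u v = 0) → u = 0)
    (w w' : M) (M₀ : Submodule K M)
    (hww : Bf w w = 0) (hw'w' : Bf w' w' = 0) (hww' : Bf w w' = 1)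
    (horth : ∀ v ∈ M₀, Bf w v = 0 ∧ Bf w' v = 0)
    (hcompl : IsCompl (Submodule.span K {w, w'}) M₀)
    -- the semisimple element `D = dν` of `so(M)`
    (D : Module.End K M) (hDw : D w = -w) (hDw' : D w' = w') (hD₀ : ∀ v ∈ M₀, D v = 0)
    -- `t` is a Cartan subalgebra of `so(M, Bf)` containing `D`:
    (t : Submodule K (Module.End K M))
    (htso : ∀ x ∈ t, IsSkewAdjEnd Bf x)
    (hDt : D ∈ t)
    (htab : ∀ x ∈ t, ∀ y ∈ t, ⁅x, y⁆ = 0)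
    (htmax : ∀ x : Module.End K M, IsSkewAdjEnd Bf x → (∀ y ∈ t, ⁅x, y⁆ = 0) → x ∈ t)
    (htss : ∀ x ∈ t, Module.End.IsSemisimple x)
    -- `α` is a root, positive relative to `ν` (its root space lies in `Lie U_{SO(M),ν}`):
    (α : Module.End K M →ₗ[K] K)
    (hαroot : ∃ x ∈ rootSet Bf t α, x ≠ 0)
    (hαpos : α D = 1 ∨ α D = 2)
    -- `h` is a one-dimensional subalgebra of `Lie U_{SO(M), ν⁻¹}`:
    (h : Submodule K (Module.End K M))
    (hdim : Module.finrank K ↥h = 1)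
    (hneg : ∀ x ∈ h, IsSkewAdjEnd Bf x ∧
      ⁅D, ⁅D, x⁆⁆ + (3 : K) • ⁅D, x⁆ + (2 : K) • x = 0)
    -- (1) `[h, so(M)_α]` is a one-dimensional subalgebra of the Cartan `t`:
    (hT1 : Module.finrank K
      ↥(Submodule.span K {z : Module.End K M |
        ∃ x ∈ h, ∃ y ∈ rootSet Bf t α, z = ⁅x, y⁆}) = 1)
    (hTt : Submodule.span K {z : Module.End K M |
        ∃ x ∈ h, ∃ y ∈ rootSet Bf t α, z = ⁅x, y⁆} ≤ t)
    -- (2) `[[h, so(M)_α], h] ⊆ h`: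
    (hT2 : ∀ z ∈ Submodule.span K {z : Module.End K M |
        ∃ x ∈ h, ∃ y ∈ rootSet Bf t α, z = ⁅x, y⁆}, ∀ x ∈ h, ⁅z, x⁆ ∈ h) :
    (h : Set (Module.End K M)) = rootSet Bf t (-α) := by
  have hw'w : Bf w' w = 1 := by rw [hsymm]; exact hww'
  have hwv : ∀ v ∈ M₀, Bf w v = 0 := fun v hv => (horth v hv).1
  have hw'v : ∀ v ∈ M₀, Bf w' v = 0 := fun v hv => (horth v hv).2
  have hvw : ∀ v ∈ M₀, Bf v w = 0 := fun v hv => by rw [hsymm]; exact hwv v hv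
  have hvw' : ∀ v ∈ M₀, Bf v w' = 0 := fun v hv => by rw [hsymm]; exact hw'v v hv
  have hdec : ∀ m : M, m - Bf w' m • w - Bf w m • w' ∈ M₀ := by
    intro m
    have hm : m ∈ Submodule.span K {w, w'} ⊔ M₀ := by
      rw [hcompl.sup_eq_top]; trivial
    rcases Submodule.mem_sup.mp hm with ⟨y, hy, z, hz, hyz⟩
    rcases Submodule.mem_span_pair.mp hy with ⟨a, b, hab⟩
    have h1 : Bf w' m = a := by
      rw [← hyz, ← hab]; simp [hw'w, hw'w', hw'v z hz]
    have h2 : Bf w m = b := by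
      rw [← hyz, ← hab]; simp [hww, hww', hwv z hz]
    have h3 : m - Bf w' m • w - Bf w m • w' = z := by
      rw [h1, h2, ← hyz, ← hab]; abel
    rw [h3]; exact hz
  have hDm : ∀ m : M, D m = -(Bf w' m • w) + Bf w m • w' := by
    intro m
    have h0 := hdec m
    have hm : m = Bf w' m • w + Bf w m • w' + (m - Bf w' m • w - Bf w m • w') := by abel
    conv_lhs => rw [hm]
    rw [map_add, map_add, map_smul, map_smul, hDw, hDw', hD₀ _ h0]
    module
  have hcoeff : ∀ (cc : K) (m : M), D m = cc • m →
      (cc + 1) * Bf w' m = 0 ∧ (cc - 1) * Bf w m = 0 ∧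
      cc • (m - Bf w' m • w - Bf w m • w') = 0 := by
    intro cc m hm
    have h1 : Bf w' (D m) = cc * Bf w' m := by rw [hm]; simp
    have h2 : Bf w (D m) = cc * Bf w m := by rw [hm]; simp
    rw [hDm m] at h1 h2
    simp [hw'w, hw'w', hww, hww'] at h1 h2
    have e1 : (cc + 1) * Bf w' m = 0 := by linear_combination -h1
    have e2 : (cc - 1) * Bf w m = 0 := by linear_combination -h2
    refine ⟨e1, e2, ?_⟩
    have : cc • (m - Bf w' m • w - Bf w m • w') =
        D m - (cc * Bf w' m) • w - (cc * Bf w m) • w' := by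
      rw [hm]; module
    rw [this, hDm m]
    have e1' : (cc * Bf w' m) • w = (- Bf w' m) • w := by
      congr 1; linear_combination e1
    have e2' : (cc * Bf w m) • w' = (Bf w m) • w' := by
      congr 1; linear_combination e2
    rw [e1', e2']; module
  have heigm1 : ∀ m : M, D m = -m → m = Bf w' m • w := by
    intro m hm
    obtain ⟨e1, e2, e3⟩ := hcoeff (-1) m (by rw [hm]; module)
    have hb : Bf w m = 0 := by linear_combination (-1/2 : K) * e2
    have hr : m - Bf w' m • w - Bf w m • w' = 0 := by
      have := congrArg (fun v => (-1 : K) • v) e3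
      simpa using this
    have := sub_eq_zero.mp (by rw [hb] at hr; simpa using hr)
    simpa using this
  have heig1 : ∀ m : M, D m = m → m = Bf w m • w' := by
    intro m hm
    obtain ⟨e1, e2, e3⟩ := hcoeff 1 m (by rw [hm]; module)
    have ha : Bf w' m = 0 := by linear_combination (1/2 : K) * e1
    have hr : m - Bf w' m • w - Bf w m • w' = 0 := by simpa using e3
    rw [ha] at hr
    have := sub_eq_zero.mp (by simpa using hr)
    simpa using this
  have heig0 : ∀ m : M, D m = 0 → m ∈ M₀ := by
    intro m hm
    obtain ⟨e1, e2, e3⟩ := hcoeff 0 m (by rw [hm]; module)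
    have ha : Bf w' m = 0 := by linear_combination e1
    have hb : Bf w m = 0 := by linear_combination -e2
    have := hdec m
    rwa [ha, hb, zero_smul, zero_smul, sub_zero, sub_zero] at this
  have heigother : ∀ (cc : K) (m : M), cc ≠ -1 → cc ≠ 1 → cc ≠ 0 →
      D m = cc • m → m = 0 := by
    intro cc m hm1 hm2 hm3 hm
    obtain ⟨e1, e2, e3⟩ := hcoeff cc m hm
    have ha : Bf w' m = 0 := by
      rcases mul_eq_zero.mp e1 with h | h
      · exact absurd (by linear_combination h : cc = -1) hm1
      · exact h
    have hb : Bf w m = 0 := by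
      rcases mul_eq_zero.mp e2 with h | h
      · exact absurd (by linear_combination h : cc = 1) hm2
      · exact h
    have hr : m - Bf w' m • w - Bf w m • w' = 0 := by
      rcases smul_eq_zero.mp e3 with h | h
      · exact absurd h hm3
      · exact h
    rw [ha, hb] at hr
    simpa using hr
  have lieapp : ∀ (A B : Module.End K M) (m : M), ⁅A, B⁆ m = A (B m) - B (A m) := by
    intro A B m
    simp [Ring.lie_def, Module.End.mul_apply]
  have hDsk : IsSkewAdjEnd Bf D := by
    intro u v
    rw [hDm u, hDm v]
    simp only [map_add, map_neg, map_smul, LinearMap.neg_apply, LinearMap.add_apply,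
      LinearMap.smul_apply, smul_eq_mul]
    rw [hsymm u w, hsymm u w']
    ring
  have hsklie : ∀ x y : Module.End K M, IsSkewAdjEnd Bf x → IsSkewAdjEnd Bf y →
      IsSkewAdjEnd Bf ⁅x, y⁆ := by
    intro x y hx hy u v
    rw [lieapp, lieapp]
    have h1 := hx (y u) v
    have h2 := hy u (x v)
    have h3 := hy (x u) v
    have h4 := hx u (y v)
    simp only [map_sub, LinearMap.sub_apply]
    linear_combination h1 - h2 - h3 + h4
  have hext2 : ∀ F G : Module.End K M, F w = G w → F w' = G w' →
      (∀ v ∈ M₀, F v = G v) → F = G := by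
    intro F G h1 h2 h3
    ext m
    have hm : m = Bf w' m • w + Bf w m • w' + (m - Bf w' m • w - Bf w m • w') := by abel
    conv_lhs => rw [hm]
    conv_rhs => rw [hm]
    rw [map_add, map_add, map_smul, map_smul, map_add, map_add, map_smul, map_smul,
      h1, h2, h3 _ (hdec m)]
  -- skew endos of bracket-weight -2 vanish
  have hwtm2 : ∀ F : Module.End K M, IsSkewAdjEnd Bf F → ⁅D, F⁆ = (-2 : K) • F → F = 0 := by
    intro F hsk hbr
    have happ : ∀ m, D (F m) - F (D m) = (-2 : K) • F m := by
      intro m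
      have := congrArg (fun (G : Module.End K M) => G m) hbr
      simpa [lieapp] using this
    have hFw : F w = 0 := by
      have h1 := happ w
      rw [hDw, map_neg] at h1
      have h2 : D (F w) = (-3 : K) • F w := by
        linear_combination (norm := module) h1
      exact heigother (-3) (F w) (by norm_num) (by norm_num) (by norm_num) h2
    have hFw' : F w' = 0 := by
      have h1 := happ w'
      rw [hDw'] at h1
      have h2 : D (F w') = -(F w') := by linear_combination (norm := module) h1
      have h3 := heigm1 _ h2
      have h4 := hsk w' w'
      rw [h3] at h4
      simp only [map_smul, LinearMap.smul_apply, smul_eq_mul, hww', hw'w] at h4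
      have : Bf w' (F w') = 0 := by linear_combination (1/2 : K) * h4
      rw [h3, this, zero_smul]
    have hFv : ∀ v ∈ M₀, F v = 0 := by
      intro v hv
      have h1 := happ v
      rw [hD₀ v hv, map_zero] at h1
      have h2 : D (F v) = (-2 : K) • F v := by linear_combination (norm := module) h1
      exact heigother (-2) (F v) (by norm_num) (by norm_num) (by norm_num) h2
    exact hext2 F 0 (by simpa using hFw) (by simpa using hFw') (by simpa using hFv)
  -- structure of skew endos of bracket-weight -1
  have hwm1 : ∀ F : Module.End K M, IsSkewAdjEnd Bf F → ⁅D, F⁆ = -F →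
      F w' ∈ M₀ ∧ ∀ m, F m = Bf w m • (F w') - Bf (F w') m • w := by
    intro F hsk hbr
    have happ : ∀ m, D (F m) - F (D m) = -(F m) := by
      intro m
      have := congrArg (fun (G : Module.End K M) => G m) hbr
      simpa [lieapp] using this
    have hFw : F w = 0 := by
      have h1 := happ w
      rw [hDw, map_neg] at h1
      have h2 : D (F w) = (-2 : K) • F w := by linear_combination (norm := module) h1
      exact heigother (-2) _ (by norm_num) (by norm_num) (by norm_num) h2
    have hFw' : F w' ∈ M₀ := by
      have h1 := happ w'
      rw [hDw'] at h1
      have h2 : D (F w') = 0 := by linear_combination (norm := module) h1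
      exact heig0 _ h2
    refine ⟨hFw', ?_⟩
    have hFv : ∀ v ∈ M₀, F v = -(Bf (F w') v • w) := by
      intro v hv
      have h1 := happ v
      rw [hD₀ v hv, map_zero] at h1
      have h2 : D (F v) = -(F v) := by linear_combination (norm := module) h1
      have h3 := heigm1 _ h2
      have h4 := hsk v w'
      have h5 : Bf w' (F v) = -(Bf (F w') v) := by
        rw [hsymm w' (F v), hsymm (F w') v]; linear_combination h4
      rw [h5] at h3
      rw [h3]; module
    have hFG : F = LinearMap.smulRight (Bf w) (F w') -
        LinearMap.smulRight (Bf (F w')) w := by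
      apply hext2
      · simp only [LinearMap.sub_apply, LinearMap.smulRight_apply, hww, zero_smul,
          hvw _ hFw', hFw]
        module
      · simp only [LinearMap.sub_apply, LinearMap.smulRight_apply, hww', one_smul,
          hvw' _ hFw']
        module
      · intro v hv
        simp only [LinearMap.sub_apply, LinearMap.smulRight_apply, hwv v hv, zero_smul,
          hFv v hv]
        module
    intro m
    conv_lhs => rw [hFG]
    simp [LinearMap.smulRight_apply]
  -- structure of skew endos of bracket-weight +1
  have hwp1 : ∀ F : Module.End K M, IsSkewAdjEnd Bf F → ⁅D, F⁆ = F →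
      F w ∈ M₀ ∧ ∀ m, F m = Bf w' m • (F w) - Bf (F w) m • w' := by
    intro F hsk hbr
    have happ : ∀ m, D (F m) - F (D m) = F m := by
      intro m
      have := congrArg (fun (G : Module.End K M) => G m) hbr
      simpa [lieapp] using this
    have hFw' : F w' = 0 := by
      have h1 := happ w'
      rw [hDw'] at h1
      have h2 : D (F w') = (2 : K) • F w' := by linear_combination (norm := module) h1
      exact heigother 2 _ (by norm_num) (by norm_num) (by norm_num) h2
    have hFw : F w ∈ M₀ := by
      have h1 := happ w
      rw [hDw, map_neg] at h1
      have h2 : D (F w) = 0 := by linear_combination (norm := module) h1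
      exact heig0 _ h2
    refine ⟨hFw, ?_⟩
    have hFv : ∀ v ∈ M₀, F v = -(Bf (F w) v • w') := by
      intro v hv
      have h1 := happ v
      rw [hD₀ v hv, map_zero] at h1
      have h2 : D (F v) = F v := by linear_combination (norm := module) h1
      have h3 := heig1 _ h2
      have h4 := hsk v w
      have h5 : Bf w (F v) = -(Bf (F w) v) := by
        rw [hsymm w (F v), hsymm (F w) v]; linear_combination h4
      rw [h5] at h3
      rw [h3]; module
    have hFG : F = LinearMap.smulRight (Bf w') (F w) -
        LinearMap.smulRight (Bf (F w)) w' := by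
      apply hext2
      · simp only [LinearMap.sub_apply, LinearMap.smulRight_apply, hw'w, one_smul,
          hvw _ hFw]
        module
      · simp only [LinearMap.sub_apply, LinearMap.smulRight_apply, hw'w', zero_smul,
          hvw' _ hFw, hFw']
        module
      · intro v hv
        simp only [LinearMap.sub_apply, LinearMap.smulRight_apply, hw'v v hv, zero_smul,
          hFv v hv]
        module
    intro m
    conv_lhs => rw [hFG]
    simp [LinearMap.smulRight_apply]
  have hskadd : ∀ x y : Module.End K M, IsSkewAdjEnd Bf x → IsSkewAdjEnd Bf y →
      IsSkewAdjEnd Bf (x + y) := by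
    intro x y hx hy u v
    simp only [LinearMap.add_apply, map_add]
    linear_combination hx u v + hy u v
  -- pick generators
  obtain ⟨X, hXh, Y, hYα, hH0⟩ :
      ∃ x ∈ h, ∃ y ∈ rootSet Bf t α, ⁅x, y⁆ ≠ (0 : Module.End K M) := by
    by_contra hcon
    push_neg at hcon
    have hsub : {z : Module.End K M | ∃ x ∈ h, ∃ y ∈ rootSet Bf t α, z = ⁅x, y⁆} ⊆
        ((⊥ : Submodule K (Module.End K M)) : Set (Module.End K M)) := by
      rintro z ⟨x, hx, y, hy, rfl⟩
      simpa using hcon x hx y hy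
    have hle := Submodule.span_le.mpr hsub
    rw [le_bot_iff] at hle
    rw [hle] at hT1
    rw [finrank_bot] at hT1
    norm_num at hT1
  have hXne : X ≠ 0 := by
    letI := LieRing.ofAssociativeRing (A := Module.End K M)
    rintro rfl; exact hH0 (by simp)
  have hYne : Y ≠ 0 := by
    letI := LieRing.ofAssociativeRing (A := Module.End K M)
    rintro rfl; exact hH0 (by simp)
  have hspan : ∀ z ∈ h, ∃ k : K, z = k • X := by
    intro z hz
    obtain ⟨k, hk⟩ := (finrank_eq_one_iff_of_nonzero' (⟨X, hXh⟩ : h)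
      (fun hh => hXne (by simpa using congrArg Subtype.val hh))).mp hdim ⟨z, hz⟩
    exact ⟨k, by simpa using (congrArg Subtype.val hk).symm⟩
  have hh1 : ∀ x ∈ h, ⁅D, x⁆ = -x := by
    intro x hx
    obtain ⟨hsk, heq⟩ := hneg x hx
    have hbr : ⁅D, ⁅D, x⁆ + x⁆ = (-2 : K) • (⁅D, x⁆ + x) := by
      letI := LieRing.ofAssociativeRing (A := Module.End K M)
      rw [lie_add]
      linear_combination (norm := module) heq
    have h0 := hwtm2 _ (hskadd _ _ (hsklie D x hDsk hsk) hsk) hbr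
    linear_combination (norm := module) h0
  have hYsk : IsSkewAdjEnd Bf Y := hYα.1
  have hYD : ⁅D, Y⁆ = α D • Y := hYα.2 D hDt
  have hαD : α D = 1 := by
    rcases hαpos with h1 | h2
    · exact h1
    · exfalso
      rw [h2] at hYD
      have happ : ∀ m, D (Y m) - Y (D m) = (2 : K) • Y m := by
        intro m
        have h3 := congrArg (fun (G : Module.End K M) => G m) hYD
        simpa [lieapp] using h3
      have hYw' : Y w' = 0 := by
        have h1 := happ w'
        rw [hDw'] at h1
        have h3 : D (Y w') = (3 : K) • Y w' := by linear_combination (norm := module) h1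
        exact heigother 3 _ (by norm_num) (by norm_num) (by norm_num) h3
      have hYv : ∀ v ∈ M₀, Y v = 0 := by
        intro v hv
        have h1 := happ v
        rw [hD₀ v hv, map_zero] at h1
        have h3 : D (Y v) = (2 : K) • Y v := by linear_combination (norm := module) h1
        exact heigother 2 _ (by norm_num) (by norm_num) (by norm_num) h3
      have hYw : Y w = 0 := by
        have h1 := happ w
        rw [hDw, map_neg] at h1
        have h3 : D (Y w) = Y w := by linear_combination (norm := module) h1
        have h4 := heig1 _ h3
        have h5 := hYsk w w
        rw [h4] at h5
        simp only [map_smul, LinearMap.smul_apply, smul_eq_mul, hww', hw'w] at h5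
        have h6 : Bf w (Y w) = 0 := by linear_combination (1/2 : K) * h5
        rw [h4, h6, zero_smul]
      exact hYne (hext2 Y 0 (by simpa using hYw) (by simpa using hYw')
        (fun v hv => by simpa using hYv v hv))
  have hXsk : IsSkewAdjEnd Bf X := (hneg X hXh).1
  obtain ⟨hu₀M, hXm⟩ := hwm1 X hXsk (hh1 X hXh)
  set u₀ := X w' with hu₀def
  have hYD1 : ⁅D, Y⁆ = Y := by rw [hYD, hαD, one_smul]
  obtain ⟨hu₁M, hYm⟩ := hwp1 Y hYsk hYD1
  set u₁ := Y w with hu₁def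
  have hu₀ne : u₀ ≠ 0 := by
    intro h0
    apply hXne
    ext m
    rw [hXm m, h0]
    simp
  have hu₁ne : u₁ ≠ 0 := by
    intro h0
    apply hYne
    ext m
    rw [hYm m, h0]
    simp
  -- structure of torus elements
  have htw : ∀ A ∈ t, A w' = Bf w (A w') • w' ∧ A w = -(Bf w (A w') • w) ∧
      ∀ v ∈ M₀, A v ∈ M₀ := by
    intro A hA
    have hcom : ⁅D, A⁆ = 0 := htab D hDt A hA
    have happ : ∀ m, D (A m) = A (D m) := by
      intro m
      have h3 := congrArg (fun (G : Module.End K M) => G m) hcom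
      simp only [lieapp, LinearMap.zero_apply] at h3
      linear_combination (norm := module) h3
    have h2 : A w' = Bf w (A w') • w' := heig1 _ (by rw [happ w', hDw'])
    have h1' : A w = Bf w' (A w) • w := heigm1 _ (by rw [happ w, hDw, map_neg])
    have h3 : ∀ v ∈ M₀, A v ∈ M₀ := fun v hv =>
      heig0 _ (by rw [happ v, hD₀ v hv, map_zero])
    refine ⟨h2, ?_, h3⟩
    have h4 := htso A hA w w'
    rw [h1'] at h4
    simp only [map_smul, LinearMap.smul_apply, smul_eq_mul, hww'] at h4
    have h5 : Bf w' (A w) = -(Bf w (A w')) := by linear_combination h4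
    rw [h1', h5]
    module
  have hu₁eig : ∀ A ∈ t, A u₁ = (α A - Bf w (A w')) • u₁ := by
    intro A hA
    have hbr := hYα.2 A hA
    have happ := LinearMap.congr_fun hbr w
    rw [lieapp A Y w, LinearMap.smul_apply] at happ
    rw [(htw A hA).2.1] at happ
    rw [map_neg, map_smul] at happ
    linear_combination (norm := module) happ
  -- the coroot-like element H
  set H := ⁅X, Y⁆ with hHdef
  have hHgen : H ∈ {z : Module.End K M | ∃ x ∈ h, ∃ y ∈ rootSet Bf t α, z = ⁅x, y⁆} :=
    ⟨X, hXh, Y, hYα, rfl⟩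
  have hHt : H ∈ t := hTt (Submodule.subset_span hHgen)
  set β := Bf u₀ u₁ with hβdef
  set Q₀ := Bf u₀ u₀ with hQ₀def
  set Q₁ := Bf u₁ u₁ with hQ₁def
  have hXu₁ : X u₁ = -(β • w) := by
    rw [hXm u₁, hwv u₁ hu₁M]
    module
  have hXw'v : X w' = u₀ := rfl
  have hYu₀ : Y u₀ = -(β • w') := by
    rw [hYm u₀, hw'v u₀ hu₀M, hsymm u₁ u₀]
    module
  have hYwv : Y w = u₁ := rfl
  have hHm : ∀ m, H m = Bf u₀ m • u₁ - Bf u₁ m • u₀ -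
      (β * Bf w' m) • w + (β * Bf w m) • w' := by
    intro m
    rw [hHdef, lieapp]
    conv_lhs => rw [hYm m, hXm m]
    rw [map_sub, map_smul, map_smul, map_sub, map_smul, map_smul]
    rw [hXu₁, hXw'v, hYu₀, hYwv]
    module
  have hHw : H w = -(β • w) := by
    rw [hHm w, hvw u₀ hu₀M, hvw u₁ hu₁M, hww, hw'w]
    module
  have hHw' : H w' = β • w' := by
    rw [hHm w', hvw' u₀ hu₀M, hvw' u₁ hu₁M, hww', hw'w']
    module
  have hHu₀ : H u₀ = Q₀ • u₁ - β • u₀ := by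
    rw [hHm u₀, hw'v u₀ hu₀M, hwv u₀ hu₀M, hsymm u₁ u₀]
    module
  have hHu₁ : H u₁ = β • u₁ - Q₁ • u₀ := by
    rw [hHm u₁, hw'v u₁ hu₁M, hwv u₁ hu₁M]
    module
  -- the two key relations
  obtain ⟨c, hc⟩ := hspan _ (hT2 H (Submodule.subset_span hHgen) X hXh)
  have hEqA : Q₀ • u₁ = (c + 2 * β) • u₀ := by
    have happ := LinearMap.congr_fun hc w'
    rw [lieapp H X w'] at happ
    rw [hHw'] at happ
    rw [map_smul] at happ
    rw [hXw'v] at happ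
    rw [hHu₀] at happ
    rw [LinearMap.smul_apply] at happ
    linear_combination (norm := module) happ
  have hEqB : Q₁ • u₀ = (2 * β - α H) • u₁ := by
    have hbr := hYα.2 H hHt
    have happ := LinearMap.congr_fun hbr w
    rw [lieapp H Y w] at happ
    rw [LinearMap.smul_apply] at happ
    rw [hHw] at happ
    rw [map_neg, map_smul] at happ
    rw [hYwv] at happ
    rw [hHu₁] at happ
    linear_combination (norm := module) -happ
  -- β is nonzero
  have hβne : β ≠ 0 := by
    intro hβ0
    have hc0 : c = 0 := by
      by_contra hcne
      have e1 : Bf (Q₀ • u₁) u₀ = Bf ((c + 2 * β) • u₀) u₀ := by rw [hEqA]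
      rw [map_smul, map_smul, LinearMap.smul_apply, LinearMap.smul_apply,
        smul_eq_mul, smul_eq_mul, hsymm u₁ u₀] at e1
      rw [← hβdef, ← hQ₀def] at e1
      rw [hβ0] at e1
      have hQ₀0 : Q₀ = 0 := by
        rcases mul_eq_zero.mp (show c * Q₀ = 0 by linear_combination -e1) with hh | hh
        · exact absurd hh hcne
        · exact hh
      have h2 : c • u₀ = 0 := by
        rw [hβ0, hQ₀0] at hEqA
        linear_combination (norm := module) -hEqA
      rcases smul_eq_zero.mp h2 with hh | hh
      · exact hcne hh
      · exact hu₀ne hh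
    have hαH0 : α H = 0 := by
      by_contra hαne
      have e2 : Bf (Q₁ • u₀) u₁ = Bf ((2 * β - α H) • u₁) u₁ := by rw [hEqB]
      rw [map_smul, map_smul, LinearMap.smul_apply, LinearMap.smul_apply,
        smul_eq_mul, smul_eq_mul] at e2
      rw [← hβdef, ← hQ₁def] at e2
      rw [hβ0] at e2
      have hQ₁0 : Q₁ = 0 := by
        rcases mul_eq_zero.mp (show α H * Q₁ = 0 by linear_combination e2) with hh | hh
        · exact absurd hh hαne
        · exact hh
      have h2 : α H • u₁ = 0 := by
        rw [hβ0, hQ₁0] at hEqB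
        linear_combination (norm := module) hEqB
      rcases smul_eq_zero.mp h2 with hh | hh
      · exact hαne hh
      · exact hu₁ne hh
    have hQ₀0 : Q₀ = 0 := by
      rcases smul_eq_zero.mp (show Q₀ • u₁ = 0 by rw [hEqA, hc0, hβ0]; module) with hh | hh
      · exact hh
      · exact absurd hh hu₁ne
    have hQ₁0 : Q₁ = 0 := by
      rcases smul_eq_zero.mp (show Q₁ • u₀ = 0 by
        rw [hEqB, hαH0, hβ0]; module) with hh | hh
      · exact hh
      · exact absurd hh hu₀ne
    have hHsq : ∀ m, H (H m) = 0 := by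
      intro m
      have h1 : H m = Bf u₀ m • u₁ - Bf u₁ m • u₀ := by
        rw [hHm m, hβ0]
        module
      rw [h1, map_sub, map_smul, map_smul, hHu₀, hHu₁, hβ0, hQ₀0, hQ₁0]
      module
    have hH00 : H = 0 := by
      refine Module.End.eq_zero_of_isNilpotent_isSemisimple ⟨2, ?_⟩ (htss H hHt)
      rw [pow_two]
      ext m
      rw [Module.End.mul_apply, hHsq m]
      exact (LinearMap.zero_apply m).symm
    exact hH0 hH00
  -- u₀ is a common eigenvector for t
  have hKu₀ : ∀ A ∈ t, ∃ lam : K, A u₀ = lam • u₀ := by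
    by_cases hdep : ∃ s : K, u₁ = s • u₀
    · obtain ⟨s, hs⟩ := hdep
      have hsne : s ≠ 0 := by rintro rfl; rw [zero_smul] at hs; exact hu₁ne hs
      intro A hA
      refine ⟨α A - Bf w (A w'), ?_⟩
      have h1 := hu₁eig A hA
      rw [hs, map_smul] at h1
      have h2 : A u₀ = s⁻¹ • (s • A u₀) := by
        rw [smul_smul, inv_mul_cancel₀ hsne, one_smul]
      rw [h2, h1]
      match_scalars
      field_simp
    · push_neg at hdep
      have hQ₀0 : Q₀ = 0 := by
        by_contra hQne
        refine hdep (Q₀⁻¹ * (c + 2 * β)) ?_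
        have h2 : u₁ = Q₀⁻¹ • (Q₀ • u₁) := by
          rw [smul_smul, inv_mul_cancel₀ hQne, one_smul]
        rw [h2, hEqA, smul_smul]
      have hc2β : c + 2 * β = 0 := by
        rw [hQ₀0, zero_smul] at hEqA
        rcases smul_eq_zero.mp hEqA.symm with hh | hh
        · exact hh
        · exact absurd hh hu₀ne
      have hQ₁0 : Q₁ = 0 := by
        by_contra hQne
        have h2 : u₀ = (Q₁⁻¹ * (2 * β - α H)) • u₁ := by
          have h3 : u₀ = Q₁⁻¹ • (Q₁ • u₀) := by
            rw [smul_smul, inv_mul_cancel₀ hQne, one_smul]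
          rw [h3, hEqB, smul_smul]
        by_cases hk : Q₁⁻¹ * (2 * β - α H) = 0
        · rw [hk, zero_smul] at h2
          exact hu₀ne h2
        · refine hdep (Q₁⁻¹ * (2 * β - α H))⁻¹ ?_
          rw [h2, smul_smul, inv_mul_cancel₀ hk, one_smul]
      have hαH2β : 2 * β - α H = 0 := by
        rw [hQ₁0, zero_smul] at hEqB
        rcases smul_eq_zero.mp hEqB.symm with hh | hh
        · exact hh
        · exact absurd hh hu₁ne
      have hHu₀' : H u₀ = -(β • u₀) := by
        rw [hHu₀, hQ₀0]
        module
      have hclaim : ∀ m, m ∈ M₀ → H m = -(β • m) → ∃ lam : K, m = lam • u₀ := by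
        intro m hm hHm'
        have h1 : H m = Bf u₀ m • u₁ - Bf u₁ m • u₀ := by
          rw [hHm m, hwv m hm, hw'v m hm]
          module
        have h3 : m = -(β⁻¹ • H m) := by
          rw [hHm']
          match_scalars
          field_simp
        have h2 : m = (β⁻¹ * Bf u₁ m) • u₀ - (β⁻¹ * Bf u₀ m) • u₁ := by
          conv_lhs => rw [h3, h1]
          module
        have h4 : H m = (β⁻¹ * Bf u₁ m) • H u₀ - (β⁻¹ * Bf u₀ m) • H u₁ := by
          conv_lhs => rw [h2]
          rw [map_sub, map_smul, map_smul]
        rw [hHm'] at h4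
        conv_lhs at h4 => rw [h2]
        rw [hHu₀', hHu₁, hQ₁0] at h4
        have h6 : (2 * (β⁻¹ * Bf u₀ m) * β) • u₁ = 0 := by
          linear_combination (norm := module) h4
        have hb0 : Bf u₀ m = 0 := by
          rcases smul_eq_zero.mp h6 with hh | hh
          · field_simp at hh
            linear_combination (1/2 : K) * hh
          · exact absurd hh hu₁ne
        refine ⟨β⁻¹ * Bf u₁ m, ?_⟩
        conv_lhs => rw [h2]
        rw [hb0]
        module
      intro A hA
      have hAu₀M : A u₀ ∈ M₀ := (htw A hA).2.2 u₀ hu₀M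
      have hcomm : ⁅H, A⁆ = 0 := htab H hHt A hA
      have hHA : H (A u₀) = -(β • A u₀) := by
        have happ := LinearMap.congr_fun hcomm u₀
        rw [lieapp H A u₀, LinearMap.zero_apply] at happ
        rw [hHu₀', map_neg, map_smul] at happ
        linear_combination (norm := module) happ
      exact hclaim (A u₀) hAu₀M hHA
  have hu₀eig : ∀ A ∈ t, A u₀ = (Bf w (A w') - α A) • u₀ := by
    intro A hA
    obtain ⟨lam, hlam⟩ := hKu₀ A hA
    have hpair := htso A hA u₀ u₁
    rw [hlam, hu₁eig A hA] at hpair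
    rw [map_smul, LinearMap.smul_apply, smul_eq_mul, map_smul, smul_eq_mul] at hpair
    rw [← hβdef] at hpair
    have hlam' : lam = Bf w (A w') - α A := by
      have h7 : (lam + (α A - Bf w (A w'))) * β = 0 := by linear_combination hpair
      rcases mul_eq_zero.mp h7 with hh | hh
      · linear_combination hh
      · exact absurd hh hβne
    rw [hlam, hlam']
  -- X is a root vector for -α
  have hXroot : ∀ A ∈ t, ⁅A, X⁆ = -(α A) • X := by
    intro A hA
    have e1 : ∀ m, Bf w (A m) = Bf w (A w') * Bf w m := by
      intro m
      have h4 := htso A hA w m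
      rw [(htw A hA).2.1] at h4
      rw [map_neg, map_smul, LinearMap.neg_apply, LinearMap.smul_apply, smul_eq_mul] at h4
      linear_combination h4
    have e2 : ∀ m, Bf u₀ (A m) = -((Bf w (A w') - α A) * Bf u₀ m) := by
      intro m
      have h4 := htso A hA u₀ m
      rw [hu₀eig A hA] at h4
      rw [map_smul, LinearMap.smul_apply, smul_eq_mul] at h4
      linear_combination h4
    ext m
    rw [lieapp A X m, LinearMap.smul_apply, hXm m, hXm (A m)]
    rw [map_sub, map_smul, map_smul, hu₀eig A hA, (htw A hA).2.1]
    rw [e1 m, e2 m]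
    module
  -- conclusion
  ext z
  constructor
  · intro hz
    obtain ⟨k, hk⟩ := hspan z hz
    refine ⟨(hneg z hz).1, ?_⟩
    intro A hA
    letI := LieRing.ofAssociativeRing (A := Module.End K M)
    rw [hk, lie_smul, hXroot A hA, LinearMap.neg_apply]
    module
  · rintro ⟨hzsk, hzbr⟩
    show z ∈ h
    have hzD : ⁅D, z⁆ = -z := by
      have h4 := hzbr D hDt
      rw [LinearMap.neg_apply, hαD] at h4
      rw [h4]
      module
    obtain ⟨hz₀M, hzm⟩ := hwm1 z hzsk hzD
    set z₀ := z w' with hz₀def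
    have hz₀eig : ∀ A ∈ t, A z₀ = (Bf w (A w') - α A) • z₀ := by
      intro A hA
      have happ := LinearMap.congr_fun (hzbr A hA) w'
      rw [lieapp A z w', LinearMap.smul_apply, LinearMap.neg_apply] at happ
      rw [(htw A hA).1, map_smul] at happ
      linear_combination (norm := module) happ
    have hKz₀ : ∃ r : K, z₀ = r • u₀ := by
      by_contra hcon
      push_neg at hcon
      obtain ⟨x, hxeig, hxu₀, hxK⟩ : ∃ x : M, (∀ A ∈ t, A x = (Bf w (A w') - α A) • x) ∧
          Bf x u₀ = 0 ∧ ∀ k : K, x ≠ k • u₀ := by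
        by_cases h0 : Bf z₀ u₀ = 0
        · exact ⟨z₀, hz₀eig, h0, hcon⟩
        · have hηα : ∀ A ∈ t, Bf w (A w') = α A := by
            intro A hA
            have h4 := htso A hA z₀ u₀
            rw [hz₀eig A hA, hu₀eig A hA] at h4
            rw [map_smul, LinearMap.smul_apply, smul_eq_mul, map_smul, smul_eq_mul] at h4
            have h5 : (Bf w (A w') - α A) * (2 * Bf z₀ u₀) = 0 := by linear_combination h4
            rcases mul_eq_zero.mp h5 with hh | hh
            · linear_combination hh
            · exact absurd (by linear_combination (1/2 : K) * hh) h0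
          have hαHβ : α H = β := by
            rw [← hηα H hHt, hHw', map_smul, smul_eq_mul, hww', mul_one]
          have hQ₀Q₁ : Q₁ * Q₀ = β * β := by
            have e3 : Bf (Q₁ • u₀) u₀ = Bf ((2 * β - α H) • u₁) u₀ := by rw [hEqB]
            rw [map_smul, map_smul, LinearMap.smul_apply, LinearMap.smul_apply,
              smul_eq_mul, smul_eq_mul, hsymm u₁ u₀] at e3
            rw [← hβdef, ← hQ₀def] at e3
            rw [hαHβ] at e3
            linear_combination e3
          have hQ₀ne : Q₀ ≠ 0 := by
            intro hq
            rw [hq, mul_zero] at hQ₀Q₁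
            exact hβne (mul_self_eq_zero.mp hQ₀Q₁.symm)
          refine ⟨z₀ - (Bf z₀ u₀ / Q₀) • u₀, ?_, ?_, ?_⟩
          · intro A hA
            rw [map_sub, map_smul, hz₀eig A hA, hu₀eig A hA]
            module
          · rw [map_sub, map_smul, LinearMap.sub_apply, LinearMap.smul_apply, smul_eq_mul]
            rw [← hQ₀def]
            field_simp
            ring
          · intro k hk
            exact hcon (k + Bf z₀ u₀ / Q₀) (by rw [add_smul, ← hk]; module)
      set S : Module.End K M := LinearMap.smulRight (Bf u₁) x -
        LinearMap.smulRight (Bf x) u₁ with hSdef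
      have hSapp : ∀ m, S m = Bf u₁ m • x - Bf x m • u₁ := by
        intro m
        rw [hSdef, LinearMap.sub_apply, LinearMap.smulRight_apply, LinearMap.smulRight_apply]
      have hSsk : IsSkewAdjEnd Bf S := by
        intro u v
        rw [hSapp u, hSapp v]
        rw [map_sub, map_smul, map_smul, map_sub, map_smul, map_smul]
        simp only [LinearMap.sub_apply, LinearMap.smul_apply, smul_eq_mul]
        rw [hsymm u x, hsymm u u₁]
        ring
      have hScomm : ∀ A ∈ t, ⁅S, A⁆ = 0 := by
        intro A hA
        have e1 : ∀ m, Bf u₁ (A m) = -((α A - Bf w (A w')) * Bf u₁ m) := by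
          intro m
          have h4 := htso A hA u₁ m
          rw [hu₁eig A hA, map_smul, LinearMap.smul_apply, smul_eq_mul] at h4
          linear_combination h4
        have e2 : ∀ m, Bf x (A m) = -((Bf w (A w') - α A) * Bf x m) := by
          intro m
          have h4 := htso A hA x m
          rw [hxeig A hA, map_smul, LinearMap.smul_apply, smul_eq_mul] at h4
          linear_combination h4
        ext m
        rw [lieapp S A m, LinearMap.zero_apply]
        rw [hSapp (A m), hSapp m]
        rw [map_sub, map_smul, map_smul, hxeig A hA, hu₁eig A hA]
        rw [e1 m, e2 m]
        module
      have hSt : S ∈ t := htmax S hSsk hScomm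
      have hfin := hu₀eig S hSt
      have hSu₀ : S u₀ = β • x := by
        rw [hSapp u₀, hsymm u₁ u₀, ← hβdef, hxu₀, zero_smul, sub_zero]
      rw [hSu₀] at hfin
      refine hxK (β⁻¹ * (Bf w (S w') - α S)) ?_
      have h5 : x = β⁻¹ • (β • x) := by
        rw [smul_smul, inv_mul_cancel₀ hβne, one_smul]
      rw [h5, hfin, smul_smul]
    obtain ⟨r, hr⟩ := hKz₀
    have hzX : z = r • X := by
      ext m
      rw [hzm m, LinearMap.smul_apply, hXm m, hr]
      rw [map_smul, LinearMap.smul_apply, smul_eq_mul]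
      module
    rw [hzX]
    exact h.smul_mem r hXh
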